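/- If a PaRL task with plan options is frame preserving, then for every labeled transition ⟨s, o, t⟩ of the option-induced SMDP transition graph, the abstract state of t equals the result of applying the operator o to the abstract state of s, i.e., L(t) = L(s)⟦o⟧. -/

import Mathlib

/-- A SAS+ operator: partial states `pre` and `eff` given as partial functions
from variables to values. -/
structure SasOp (V D : Type) where
  pre : V → Option D
  eff : V → Option D

/-- The set of facts of a partial state. -/
def pfacts {V D : Type} (p : V → Option D) : Set (V × D) := {f | p f.1 = some f.2}

/-- The set of facts of a total state. -/
def stFacts {V D : Type} (s : V → D) : Set (V × D) := {f | s f.1 = f.2}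

/-- Applying an operator: effect variables get their `eff` value, others unchanged. -/
def applyOp {V D : Type} (o : SasOp V D) (s : V → D) : V → D :=
  fun v => (o.eff v).getD (s v)

/-- The prevail condition: the preconditions on variables outside the effect. -/
def prv {V D : Type} (o : SasOp V D) : V → Option D := fun v =>
  match o.eff v with
  | some _ => none
  | none => o.pre v

/-- The frame of an operator option at abstract state `x`:
`prv(o) ∪ (x \ (pre(o) ∪ eff(o)))` as fact sets. -/
def optFrame {V D : Type} (o : SasOp V D) (x : V → D) : Set (V × D) :=
  pfacts (prv o) ∪ (stFacts x \ (pfacts o.pre ∪ pfacts o.eff))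

/-- If a PaRL task with plan options is frame preserving, then every SMDP
transition `⟨s, o, t⟩` satisfies `L(t) = L(s)⟦o⟧`. -/
theorem stmt0 {S V D : Type} (Ops : Set (SasOp V D)) (L : S → V → D)
    (Reach : S → SasOp V D → S → Prop)  -- positive probability of the option execution
    (Trans : S → SasOp V D → S → Prop)  -- SMDP labeled transitions
    (hTrans : ∀ s o t, Trans s o t ↔
      o ∈ Ops ∧ pfacts o.pre ⊆ stFacts (L s) ∧
      (pfacts (prv o) ∪ pfacts o.eff) ⊆ stFacts (L t) ∧ Reach s o t)
    (hFP : ∀ s o t, Trans s o t → optFrame o (L s) = optFrame o (L t)) :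
    ∀ s o t, Trans s o t → L t = applyOp o (L s) := by
  intro s o t hT
  obtain ⟨-, hpre, hterm, -⟩ := (hTrans s o t).mp hT
  have hframe := hFP s o t hT
  funext v
  cases heff : o.eff v with
  | some d =>
    have : (v, d) ∈ stFacts (L t) := hterm (Or.inr heff)
    simpa [applyOp, heff, stFacts] using this
  | none =>
    have happ : applyOp o (L s) v = L s v := by simp [applyOp, heff]
    rw [happ]
    cases hpv : o.pre v with
    | some d =>
      have hprv : prv o v = some d := by simp [prv, heff, hpv]
      have h1 : (v, d) ∈ stFacts (L t) := hterm (Or.inl hprv)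
      have h2 : (v, d) ∈ stFacts (L s) := hpre hpv
      exact h1.trans h2.symm
    | none =>
      have hmem : (v, L s v) ∈ optFrame o (L s) :=
        Or.inr ⟨rfl, fun h => by rcases h with h | h <;> simp_all [pfacts]⟩
      rw [hframe] at hmem
      rcases hmem with h | h
      · have : prv o v = none := by simp [prv, heff, hpv]
        simp [pfacts, this] at h
      · exact h.1
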